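/- In the Monteiro–Svaiter method with a_{k+1} = (1/κ + √(1/κ² + 4A_k/κ))/2 and A_{k+1} = A_k + a_{k+1}, A_0 = 0, κ > 0, the sequence satisfies A_{k+1} = κ·a_{k+1}² and A_k ≥ k²/(4κ) for all k ≥ 1. -/

import Mathlib

/-- In the Monteiro–Svaiter recursion `a_{k+1} = (1/κ + √(1/κ² + 4A_k/κ))/2`,
`A_{k+1} = A_k + a_{k+1}`, `A_0 = 0`, one has `A_{k+1} = κ a_{k+1}²` and
`A_k ≥ k²/(4κ)` for all `k ≥ 1`. -/
theorem monteiro_svaiter_growth (κ : ℝ) (hκ : 0 < κ) (a A : ℕ → ℝ)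
    (hA0 : A 0 = 0)
    (ha : ∀ k : ℕ, a (k+1) = (1/κ + Real.sqrt (1/κ^2 + 4 * A k / κ)) / 2)
    (hA : ∀ k : ℕ, A (k+1) = A k + a (k+1)) :
    (∀ k : ℕ, A (k+1) = κ * a (k+1)^2) ∧
    (∀ k : ℕ, 1 ≤ k → (k:ℝ)^2 / (4 * κ) ≤ A k) := by
  have hanneg : ∀ k : ℕ, 0 ≤ a (k+1) := by
    intro k
    rw [ha k]
    have h1 : 0 ≤ 1/κ := by positivity
    have h2 := Real.sqrt_nonneg (1/κ^2 + 4 * A k / κ)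
    linarith
  have hAnneg : ∀ k : ℕ, 0 ≤ A k := by
    intro k
    induction k with
    | zero => simp [hA0]
    | succ n ih => rw [hA n]; have := hanneg n; linarith
  have part2 : ∀ k : ℕ, (k:ℝ)^2 / (4 * κ) ≤ A k := by
    intro k
    induction k with
    | zero => simp [hA0]
    | succ n ih =>
      have hrad : (0:ℝ) ≤ 1/κ^2 + 4 * A n / κ := by
        have := hAnneg n; positivity
      have hs1 : Real.sqrt (4 * A n / κ) ≤ Real.sqrt (1/κ^2 + 4 * A n / κ) := by
        apply Real.sqrt_le_sqrt
        have : (0:ℝ) < 1/κ^2 := by positivity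
        linarith
      have hs2 : ((n:ℝ)/κ) ≤ Real.sqrt (4 * A n / κ) := by
        rw [show ((n:ℝ)/κ) = Real.sqrt (((n:ℝ)/κ)^2) from
          (Real.sqrt_sq (by positivity)).symm]
        apply Real.sqrt_le_sqrt
        rw [div_pow]
        rw [div_le_div_iff₀ (by positivity) hκ]
        have : (n:ℝ)^2 / (4*κ) * (4*κ) ≤ A n * (4*κ) := by
          apply mul_le_mul_of_nonneg_right ih (by positivity)
        rw [div_mul_cancel₀ _ (by positivity : (4:ℝ)*κ ≠ 0)] at this
        nlinarith [sq_nonneg κ]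
      have hkey : (n:ℝ)/(2*κ) + 1/(2*κ) ≤ a (n+1) := by
        rw [ha n]
        have : (n:ℝ)/κ ≤ Real.sqrt (1/κ^2 + 4 * A n / κ) := le_trans hs2 hs1
        have hκ' : κ ≠ 0 := ne_of_gt hκ
        have e1 : (n:ℝ)/(2*κ) = ((n:ℝ)/κ)/2 := by ring
        have e2 : (1:ℝ)/(2*κ) = (1/κ)/2 := by ring
        rw [e1, e2]
        linarith
      rw [hA n]
      have hn : (0:ℝ) ≤ (n:ℝ) := Nat.cast_nonneg n
      push_cast
      rw [div_le_iff₀ (by positivity)]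
      rw [div_le_iff₀ (by positivity)] at ih
      have h1 : (n:ℝ)/(2*κ) + 1/(2*κ) = ((n:ℝ)+1)/(2*κ) := by ring
      have h2 : ((n:ℝ)+1)/(2*κ) * (4*κ) = 2*((n:ℝ)+1) := by
        field_simp; ring
      nlinarith [hkey, mul_le_mul_of_nonneg_right hkey (by positivity : (0:ℝ) ≤ 4*κ)]
  refine ⟨?_, fun k _ => part2 k⟩
  intro k
  have hrad : (0:ℝ) ≤ 1/κ^2 + 4 * A k / κ := by
    have := hAnneg k; positivity
  have hs2 : Real.sqrt (1/κ^2 + 4 * A k / κ) ^ 2 = 1/κ^2 + 4 * A k / κ :=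
    Real.sq_sqrt hrad
  rw [hA k, ha k]
  have hκ' : κ ≠ 0 := ne_of_gt hκ
  set s := Real.sqrt (1/κ^2 + 4 * A k / κ) with hsdef
  field_simp at hs2 ⊢
  linear_combination (-1) * hs2
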